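/- Let Φ be an n×m real matrix and S an invertible n×n real matrix. Then P := Φ (SΦ)⁺ S satisfies P² = P and Im(P) = Im(Φ), i.e., P is a (generally non-orthogonal) projection onto the column space of Φ. -/
import Mathlib

open Matrix

/-- `B` is the Moore–Penrose pseudoinverse of `A` (the four Penrose conditions). -/
def IsMoorePenrose {k l : ℕ} (A : Matrix (Fin k) (Fin l) ℝ)
    (B : Matrix (Fin l) (Fin k) ℝ) : Prop :=
  A * B * A = A ∧ B * A * B = B ∧ (A * B)ᵀ = A * B ∧ (B * A)ᵀ = B * A

theorem stmt18 {n m : ℕ} (Φ : Matrix (Fin n) (Fin m) ℝ)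
    (S : Matrix (Fin n) (Fin n) ℝ) (hS : IsUnit S)
    (Pinv : Matrix (Fin m) (Fin n) ℝ) (hPinv : IsMoorePenrose (S * Φ) Pinv)
    (P : Matrix (Fin n) (Fin n) ℝ) (hP : P = Φ * Pinv * S) :
    P * P = P ∧
      LinearMap.range (Matrix.toLin' P) = LinearMap.range (Matrix.toLin' Φ) := by
  obtain ⟨h1, h2, _, _⟩ := hPinv
  have hS' : Invertible S := hS.invertible
  have hPP : P * P = P := by
    subst hP
    have e : Φ * Pinv * S * (Φ * Pinv * S) = Φ * (Pinv * (S * Φ) * Pinv) * S := by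
      simp only [Matrix.mul_assoc]
    rw [e, h2]
  have hPΦ : P * Φ = Φ := by
    subst hP
    have e : S * (Φ * Pinv * S * Φ) = S * Φ := by
      simp only [← Matrix.mul_assoc] at h1 ⊢; exact h1
    calc Φ * Pinv * S * Φ = ⅟S * (S * (Φ * Pinv * S * Φ)) := by
          rw [← Matrix.mul_assoc, invOf_mul_self, Matrix.one_mul]
      _ = ⅟S * (S * Φ) := by rw [e]
      _ = Φ := by rw [← Matrix.mul_assoc, invOf_mul_self, Matrix.one_mul]
  refine ⟨hPP, le_antisymm ?_ ?_⟩
  · have h : P = Φ * (Pinv * S) := by rw [hP, Matrix.mul_assoc]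
    rw [h, Matrix.toLin'_mul]
    exact LinearMap.range_comp_le_range _ _
  · conv_lhs => rw [← hPΦ]
    rw [Matrix.toLin'_mul]
    exact LinearMap.range_comp_le_range _ _
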